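/- The Malvenuto–Reutenauer product on permutations, defined by σ *′ ρ := sh(σ ⊗ ρ̄) where ρ̄(i) = n + ρ(i) for σ ∈ Sₙ, ρ ∈ Sₘ and permutations are viewed as words, is an associative product on ℤS = ⊕_{n≥0} ℤSₙ with identity the unique element λ ∈ S₀. -/

import Mathlib

def shuffle {A : Type*} : List A → List A → Multiset (List A)
  | [], w => {w}
  | u, [] => {u}
  | a :: u, b :: v => (shuffle u (b :: v)).map (a :: ·) + (shuffle (a :: u) v).map (b :: ·)
termination_by u v => u.length + v.length
decreasing_by all_goals simp +arith +decide

/-- A word `w` on ℕ is a permutation word (an element of `S_{|w|}`, 0-indexed) if it is a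
rearrangement of `(0, 1, …, |w|-1)`. -/
def IsPermWord (w : List ℕ) : Prop := w.Perm (List.range w.length)

/-- The Malvenuto–Reutenauer product on permutation words:
`σ *′ ρ := sh(σ ⊗ ρ̄)` where `ρ̄(i) = n + ρ(i)`, `n = |σ|`. -/
def mrW (u v : List ℕ) : Multiset (List ℕ) := shuffle u (v.map (· + u.length))

/-- The ℤ-bilinear extension of the MR product to `ℤS` (the free ℤ-module on
permutation words). -/
noncomputable def mrMul (p q : List ℕ →₀ ℤ) : List ℕ →₀ ℤ :=
  p.sum fun u a => q.sum fun v b =>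
    (a * b) • ((mrW u v).map (fun w => Finsupp.single w (1 : ℤ))).sum

/- ### word-level lemmas -/

theorem shuffle_nil_left {A : Type*} (w : List A) : shuffle [] w = {w} := by
  cases w <;> simp [shuffle]

theorem shuffle_nil_right {A : Type*} (u : List A) : shuffle u [] = {u} := by
  cases u <;> simp [shuffle]

theorem shuffle_cons {A : Type*} (a b : A) (u v : List A) :
    shuffle (a :: u) (b :: v) =
      (shuffle u (b :: v)).map (a :: ·) + (shuffle (a :: u) v).map (b :: ·) := by
  simp [shuffle]

theorem bind_singleton_id {A : Type*} (s : Multiset A) :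
    s.bind (fun x => ({x} : Multiset A)) = s := by
  simpa using Multiset.bind_singleton (s := s) id

theorem length_mem_shuffle {A : Type*} : ∀ (u v : List A), ∀ x ∈ shuffle u v,
    x.length = u.length + v.length
  | [], v => by simp [shuffle_nil_left]
  | a :: u, [] => by simp [shuffle_nil_right]
  | a :: u, b :: v => by
      intro x hx
      rw [shuffle_cons] at hx
      rcases Multiset.mem_add.1 hx with h | h <;> rcases Multiset.mem_map.1 h with ⟨y, hy, rfl⟩
      · have := length_mem_shuffle u (b :: v) y hy; simp_all; omega
      · have := length_mem_shuffle (a :: u) v y hy; simp_all; omega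
  termination_by u v => u.length + v.length
  decreasing_by all_goals simp +arith +decide

theorem shuffle_map {A B : Type*} (f : A → B) : ∀ (u v : List A),
    (shuffle u v).map (List.map f) = shuffle (u.map f) (v.map f)
  | [], v => by simp [shuffle_nil_left]
  | a :: u, [] => by simp [shuffle_nil_right]
  | a :: u, b :: v => by
      rw [shuffle_cons, List.map_cons, List.map_cons, shuffle_cons, Multiset.map_add,
        Multiset.map_map, Multiset.map_map, ← List.map_cons (f := f) (a := b) (l := v), ← List.map_cons (f := f) (a := a) (l := u),
        ← shuffle_map f u (b :: v), ← shuffle_map f (a :: u) v,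
        Multiset.map_map, Multiset.map_map]
      simp [Function.comp_def]
  termination_by u v => u.length + v.length
  decreasing_by all_goals simp +arith +decide

def shuffle3 {A : Type*} : List A → List A → List A → Multiset (List A)
  | [], v, w => shuffle v w
  | u, [], w => shuffle u w
  | u, v, [] => shuffle u v
  | a :: u, b :: v, c :: w =>
      (shuffle3 u (b::v) (c::w)).map (a :: ·) + (shuffle3 (a::u) v (c::w)).map (b :: ·)
        + (shuffle3 (a::u) (b::v) w).map (c :: ·)
termination_by u v w => u.length + v.length + w.length
decreasing_by all_goals simp +arith +decide

theorem bind_shuffle_left {A : Type*} : (u v w : List A) →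
    (shuffle u v).bind (fun x => shuffle x w) = shuffle3 u v w
  | [], v, w => by
      simp [shuffle_nil_left, Multiset.singleton_bind, shuffle3]
  | a :: u, [], w => by
      simp [shuffle_nil_right, Multiset.singleton_bind, shuffle3]
  | a :: u, b :: v, [] => by
      simp [shuffle_nil_right, bind_singleton_id, shuffle3]
  | a :: u, b :: v, c :: w => by
      have IH1 := bind_shuffle_left u (b::v) (c::w)
      have IH2 := bind_shuffle_left (a::u) v (c::w)
      have IH3 := bind_shuffle_left (a::u) (b::v) w
      calc (shuffle (a::u) (b::v)).bind (fun x => shuffle x (c::w))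
          = (shuffle u (b::v)).bind (fun x => shuffle (a::x) (c::w))
            + (shuffle (a::u) v).bind (fun x => shuffle (b::x) (c::w)) := by
              rw [shuffle_cons, Multiset.add_bind, Multiset.bind_map, Multiset.bind_map]
        _ = ((shuffle u (b::v)).bind (fun x => shuffle x (c::w))).map (a :: ·)
            + ((shuffle u (b::v)).bind (fun x => shuffle (a::x) w)).map (c :: ·)
            + (((shuffle (a::u) v).bind (fun x => shuffle x (c::w))).map (b :: ·)
            + ((shuffle (a::u) v).bind (fun x => shuffle (b::x) w)).map (c :: ·)) := by
              simp only [shuffle_cons, Multiset.bind_add, Multiset.map_bind]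
        _ = (shuffle3 u (b::v) (c::w)).map (a :: ·) + (shuffle3 (a::u) v (c::w)).map (b :: ·)
            + (((shuffle u (b::v)).map (a :: ·)).bind (fun x => shuffle x w)
              + ((shuffle (a::u) v).map (b :: ·)).bind (fun x => shuffle x w)).map (c :: ·) := by
              rw [IH1, IH2, Multiset.bind_map, Multiset.bind_map, Multiset.map_add]
              abel
        _ = shuffle3 (a::u) (b::v) (c::w) := by
              rw [← Multiset.add_bind, ← shuffle_cons, IH3]
              rw [shuffle3]
  termination_by u v w => u.length + v.length + w.length
  decreasing_by all_goals simp +arith +decide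

theorem bind_shuffle_right {A : Type*} : (u v w : List A) →
    (shuffle v w).bind (fun y => shuffle u y) = shuffle3 u v w
  | [], v, w => by
      simp [shuffle_nil_left, bind_singleton_id, shuffle3]
  | a :: u, [], w => by
      simp [shuffle_nil_left, Multiset.singleton_bind, shuffle3]
  | a :: u, b :: v, [] => by
      simp [shuffle_nil_right, Multiset.singleton_bind, shuffle3]
  | a :: u, b :: v, c :: w => by
      have IH2 := bind_shuffle_right (a::u) v (c::w)
      have IH3 := bind_shuffle_right (a::u) (b::v) w
      calc (shuffle (b::v) (c::w)).bind (fun y => shuffle (a::u) y)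
          = (shuffle v (c::w)).bind (fun y => shuffle (a::u) (b::y))
            + (shuffle (b::v) w).bind (fun y => shuffle (a::u) (c::y)) := by
              rw [shuffle_cons, Multiset.add_bind, Multiset.bind_map, Multiset.bind_map]
        _ = ((shuffle v (c::w)).bind (fun y => shuffle u (b::y))).map (a :: ·)
            + ((shuffle v (c::w)).bind (fun y => shuffle (a::u) y)).map (b :: ·)
            + (((shuffle (b::v) w).bind (fun y => shuffle u (c::y))).map (a :: ·)
            + ((shuffle (b::v) w).bind (fun y => shuffle (a::u) y)).map (c :: ·)) := by
              simp only [shuffle_cons, Multiset.bind_add, Multiset.map_bind]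
        _ = (((shuffle v (c::w)).map (b :: ·)).bind (fun y => shuffle u y)
              + ((shuffle (b::v) w).map (c :: ·)).bind (fun y => shuffle u y)).map (a :: ·)
            + (shuffle3 (a::u) v (c::w)).map (b :: ·) + (shuffle3 (a::u) (b::v) w).map (c :: ·) := by
              rw [IH2, IH3, Multiset.bind_map, Multiset.bind_map, Multiset.map_add]
              abel
        _ = shuffle3 (a::u) (b::v) (c::w) := by
              rw [← Multiset.add_bind, ← shuffle_cons, bind_shuffle_right u (b::v) (c::w)]
              rw [shuffle3]
  termination_by u v w => u.length + v.length + w.length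
  decreasing_by all_goals simp +arith +decide

theorem mrW_assoc (u v w : List ℕ) :
    (mrW u v).bind (fun x => mrW x w) = (mrW v w).bind (fun y => mrW u y) := by
  have hL : (mrW u v).bind (fun x => mrW x w)
      = (shuffle u (v.map (· + u.length))).bind
          (fun x => shuffle x (w.map (· + (u.length + v.length)))) := by
    apply Multiset.bind_congr
    intro x hx
    have hx' := length_mem_shuffle _ _ x hx
    simp only [List.length_map] at hx'
    rw [mrW, hx']
  have hR : (mrW v w).bind (fun y => mrW u y)
      = (shuffle (v.map (· + u.length))
          ((w.map (· + v.length)).map (· + u.length))).bind (fun y => shuffle u y) := by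
    rw [mrW, ← shuffle_map (· + u.length) v (w.map (· + v.length)), Multiset.bind_map]
    rfl
  rw [hL, hR, bind_shuffle_left, bind_shuffle_right]
  have : (w.map (· + v.length)).map (· + u.length) = w.map (· + (u.length + v.length)) := by
    rw [List.map_map]
    apply List.map_congr_left
    intro x _
    simp [Function.comp]
    omega
  rw [this]

/- ### Finsupp-level lemmas -/

noncomputable def T (s : Multiset (List ℕ)) : List ℕ →₀ ℤ :=
  (s.map (fun w => Finsupp.single w (1 : ℤ))).sum

theorem T_zero : T 0 = 0 := rfl

theorem T_cons (a : List ℕ) (s : Multiset (List ℕ)) :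
    T (a ::ₘ s) = Finsupp.single a 1 + T s := by
  simp [T]

theorem T_add (s t : Multiset (List ℕ)) : T (s + t) = T s + T t := by
  simp [T]

theorem T_singleton (w : List ℕ) : T {w} = Finsupp.single w 1 := by
  simp [T]

theorem mrMul_def (p q : List ℕ →₀ ℤ) :
    mrMul p q = p.sum fun u a => q.sum fun v b => (a * b) • T (mrW u v) := rfl

theorem mrMul_zero_left (q : List ℕ →₀ ℤ) : mrMul 0 q = 0 := by
  simp [mrMul_def]

theorem mrMul_zero_right (p : List ℕ →₀ ℤ) : mrMul p 0 = 0 := by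
  simp [mrMul_def]

theorem mrMul_add_left (p₁ p₂ q : List ℕ →₀ ℤ) :
    mrMul (p₁ + p₂) q = mrMul p₁ q + mrMul p₂ q := by
  simp only [mrMul_def]
  apply Finsupp.sum_add_index'
  · intro u; simp
  · intro u a₁ a₂
    rw [← Finsupp.sum_add]
    congr 1
    funext v b
    rw [add_mul, add_smul]

theorem mrMul_add_right (p q₁ q₂ : List ℕ →₀ ℤ) :
    mrMul p (q₁ + q₂) = mrMul p q₁ + mrMul p q₂ := by
  simp only [mrMul_def]
  rw [← Finsupp.sum_add]
  congr 1
  funext u a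
  apply Finsupp.sum_add_index'
  · intro v; simp
  · intro v b₁ b₂
    rw [mul_add, add_smul]

theorem mrMul_smul_left (c : ℤ) (p q : List ℕ →₀ ℤ) :
    mrMul (c • p) q = c • mrMul p q := by
  simp only [mrMul_def]
  rw [Finsupp.sum_smul_index', Finsupp.smul_sum]
  · congr 1
    funext u a
    rw [Finsupp.smul_sum]
    congr 1
    funext v b
    rw [smul_eq_mul, mul_assoc, mul_smul]
  · intro u; simp

theorem mrMul_smul_right (c : ℤ) (p q : List ℕ →₀ ℤ) :
    mrMul p (c • q) = c • mrMul p q := by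
  simp only [mrMul_def]
  rw [Finsupp.smul_sum]
  congr 1
  funext u a
  rw [Finsupp.sum_smul_index', Finsupp.smul_sum]
  · congr 1
    funext v b
    rw [smul_eq_mul, smul_smul]; ring_nf
  · intro v; simp

theorem mrMul_single_single (u v : List ℕ) :
    mrMul (Finsupp.single u 1) (Finsupp.single v 1) = T (mrW u v) := by
  rw [mrMul_def, Finsupp.sum_single_index, Finsupp.sum_single_index] <;> simp

theorem mrMul_single_T (u : List ℕ) (t : Multiset (List ℕ)) :
    mrMul (Finsupp.single u 1) (T t) = T (t.bind (mrW u)) := by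
  induction t using Multiset.induction with
  | empty => simp [T_zero, mrMul_zero_right]
  | cons b t ih =>
      rw [T_cons, mrMul_add_right, Multiset.cons_bind, T_add, ih, mrMul_single_single]

theorem mrMul_T (s t : Multiset (List ℕ)) :
    mrMul (T s) (T t) = T (s.bind fun u => t.bind (mrW u)) := by
  induction s using Multiset.induction with
  | empty => simp [T_zero, mrMul_zero_left]
  | cons a s ih =>
      rw [T_cons, mrMul_add_left, Multiset.cons_bind, T_add, ih, mrMul_single_T]

theorem mrMul_assoc_single (u v w : List ℕ) :
    mrMul (mrMul (Finsupp.single u 1) (Finsupp.single v 1)) (Finsupp.single w 1)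
      = mrMul (Finsupp.single u 1) (mrMul (Finsupp.single v 1) (Finsupp.single w 1)) := by
  rw [mrMul_single_single, mrMul_single_single, ← T_singleton w, ← T_singleton u,
    mrMul_T, mrMul_T, Multiset.singleton_bind]
  congr 1
  have : ∀ x, Multiset.bind {w} (mrW x) = mrW x w := fun x => Multiset.singleton_bind _ _
  rw [Multiset.bind_congr (fun x _ => this x), mrW_assoc]

theorem single_eq_smul (u : List ℕ) (a : ℤ) :
    Finsupp.single u a = a • Finsupp.single u 1 := by
  rw [Finsupp.smul_single', mul_one]

theorem mrMul_assoc (p q r : List ℕ →₀ ℤ) :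
    mrMul (mrMul p q) r = mrMul p (mrMul q r) := by
  induction p using Finsupp.induction_linear with
  | zero => simp [mrMul_zero_left]
  | add p₁ p₂ h₁ h₂ => simp [mrMul_add_left, h₁, h₂]
  | single u a =>
    induction q using Finsupp.induction_linear with
    | zero => simp [mrMul_zero_left, mrMul_zero_right]
    | add q₁ q₂ h₁ h₂ => simp [mrMul_add_left, mrMul_add_right, h₁, h₂]
    | single v b =>
      induction r using Finsupp.induction_linear with
      | zero => simp [mrMul_zero_right]
      | add r₁ r₂ h₁ h₂ => simp [mrMul_add_right, h₁, h₂]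
      | single w c =>
        rw [single_eq_smul u a, single_eq_smul v b, single_eq_smul w c]
        simp only [mrMul_smul_left, mrMul_smul_right]
        rw [mrMul_assoc_single]

/-- the Malvenuto–Reutenauer product `*′` is an associative product on
`ℤS = ⊕ₙ ℤSₙ`, with identity the unique element `λ ∈ S₀` (the empty word). -/
theorem mr_product_assoc_with_identity :
    (∀ p q r : List ℕ →₀ ℤ,
      (∀ w ∈ p.support, IsPermWord w) → (∀ w ∈ q.support, IsPermWord w) →
      (∀ w ∈ r.support, IsPermWord w) →
      mrMul (mrMul p q) r = mrMul p (mrMul q r)) ∧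
    (∀ p : List ℕ →₀ ℤ, (∀ w ∈ p.support, IsPermWord w) →
      mrMul p (Finsupp.single [] 1) = p ∧ mrMul (Finsupp.single [] 1) p = p) := by
  constructor
  · intro p q r _ _ _
    exact mrMul_assoc p q r
  · intro p _
    constructor
    · have h1 : ∀ (u : List ℕ) (a : ℤ),
          ((Finsupp.single ([] : List ℕ) (1 : ℤ)).sum fun v b => (a * b) • T (mrW u v))
            = Finsupp.single u a := by
        intro u a
        rw [Finsupp.sum_single_index (by simp)]
        simp [mrW, shuffle_nil_right, T_singleton, Finsupp.smul_single']
      rw [mrMul_def,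
        Finsupp.sum_congr (g2 := fun u a => Finsupp.single u a) (fun u _ => h1 u (p u)),
        Finsupp.sum_single]
    · rw [mrMul_def, Finsupp.sum_single_index (by simp)]
      have h2 : ∀ (v : List ℕ) (b : ℤ),
          (1 * b) • T (mrW [] v) = Finsupp.single v b := by
        intro v b
        simp [mrW, shuffle_nil_left, T_singleton, Finsupp.smul_single']
      rw [Finsupp.sum_congr (g2 := fun v b => Finsupp.single v b) (fun v _ => h2 v (p v)),
        Finsupp.sum_single]
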